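/- Let n = 2m−1 be odd and let {a_k}_{k=0}^{n−1}, {b_k}_{k=0}^{n−1} be real sequences with a_k > 0 for all k and a_k = a_{n−k}, b_k = b_{n−k} for 1 ≤ k ≤ n−1. Define p_0 = 1, p_1(x) = a_0 x + b_0, and p_{k+1}(x) + p_{k−1}(x) = (a_k x + b_k) p_k(x) for 1 ≤ k ≤ n−1. Assume the zeros of p_m and p_{m−1} are all real, simple, and strictly interlacing. Then there exist real numbers x_0 > x_1 > ... > x_n such that p_{n−k}(x_j) = (−1)^j p_k(x_j) for all 0 ≤ j, k ≤ n. -/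
import Mathlib


open Polynomial Finset Filter

private lemma prod_sign_aux (t : ℝ) (r : ℕ → ℝ) (i M : ℕ) (hiM : i ≤ M)
    (hneg : ∀ l, l < i → t < r l) (hpos : ∀ l, i ≤ l → l < M → r l < t) :
    0 < (-1:ℝ)^i * ∏ l ∈ Finset.range M, (t - r l) := by
  have hsplit : ∏ l ∈ Finset.range M, (t - r l)
      = (∏ l ∈ Finset.range i, (t - r l)) * ∏ l ∈ Finset.Ico i M, (t - r l) :=
    (Finset.prod_range_mul_prod_Ico _ hiM).symm
  have h1 : (-1:ℝ)^i * ∏ l ∈ Finset.range i, (t - r l)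
      = ∏ l ∈ Finset.range i, (r l - t) := by
    have hc : (-1:ℝ)^i = ∏ _l ∈ Finset.range i, (-1:ℝ) := by simp
    rw [hc, ← Finset.prod_mul_distrib]
    exact Finset.prod_congr rfl fun l _ => by ring
  rw [hsplit, ← mul_assoc, h1]
  apply mul_pos
  · exact Finset.prod_pos fun l hl => sub_pos.mpr (hneg l (Finset.mem_range.mp hl))
  · refine Finset.prod_pos fun l hl => ?_
    obtain ⟨ha, hb⟩ := Finset.mem_Ico.mp hl
    exact sub_pos.mpr (hpos l ha hb)

private lemma poly_root_between (P : Polynomial ℝ) {α β : ℝ} (hab : α < β)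
    (h1 : eval α P < 0) (h2 : 0 < eval β P) : ∃ x, α < x ∧ x < β ∧ eval x P = 0 := by
  have := intermediate_value_Ioo hab.le (P.continuous.continuousOn (s := Set.Icc α β))
  obtain ⟨x, hx, hx0⟩ := this (Set.mem_Ioo.mpr ⟨h1, h2⟩)
  exact ⟨x, hx.1, hx.2, hx0⟩

private lemma exists_root_above (P : Polynomial ℝ) (hdeg : 0 < P.degree)
    (hlc : 0 < P.leadingCoeff) (α : ℝ) (hα : eval α P < 0) :
    ∃ x, α < x ∧ eval x P = 0 := by
  have ht := P.tendsto_atTop_of_leadingCoeff_nonneg hdeg hlc.le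
  obtain ⟨β, hβ1, hβ2⟩ := ((ht.eventually_gt_atTop 0).and (eventually_gt_atTop α)).exists
  obtain ⟨x, hx1, _, hx3⟩ := poly_root_between P hβ2 hα hβ1
  exact ⟨x, hx1, hx3⟩

theorem exists_nodes_odd (n m : ℕ) (hm : 1 ≤ m) (hn : n = 2*m - 1)
    (a b : ℕ → ℝ) (p : ℕ → Polynomial ℝ)
    (hp0 : p 0 = 1)
    (hp1 : p 1 = C (a 0) * X + C (b 0))
    (hrec : ∀ k, 1 ≤ k → k ≤ n - 1 →
      p (k+1) + p (k-1) = (C (a k) * X + C (b k)) * p k)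
    (hpos : ∀ k, k ≤ n - 1 → 0 < a k)
    (hrefl : ∀ k, 1 ≤ k → k ≤ n - 1 → a k = a (n - k) ∧ b k = b (n - k))
    -- the zeros of p m and p (m-1) are real and simple, with interlacing
    (u v : ℕ → ℝ) (cp cq : ℝ) (hcp : 0 < cp) (hcq : 0 < cq)
    (hpm : p m = C cp * ∏ i ∈ Finset.range m, (X - C (u (i+1))))
    (hpm1 : p (m-1) = C cq * ∏ i ∈ Finset.range (m-1), (X - C (v (i+1))))
    (hint : ∀ i, 1 ≤ i → i ≤ m - 1 → u i > v i ∧ v i > u (i+1)) :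
    ∃ x : ℕ → ℝ, (∀ j, j < n → x (j+1) < x j) ∧
      ∀ j k, j ≤ n → k ≤ n →
        (p (n - k)).eval (x j) = (-1)^j * (p k).eval (x j) := by
  -- ordering facts
  have hu_gt_v : ∀ i, 1 ≤ i → ∀ l, i ≤ l → l ≤ m - 1 → v l < u i := by
    intro i hi1 l hl
    induction l, hl using Nat.le_induction with
    | base => intro h; exact (hint i hi1 h).1
    | succ l hl ih =>
      intro h
      have h0 := ih (by omega)
      have a1 := (hint (l+1) (by omega) h).1
      have a2 := (hint l (by omega) (by omega)).2
      linarith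
  have hv_gt_u : ∀ l, 1 ≤ l → ∀ i, l < i → i ≤ m → u i < v l := by
    intro l hl1 i hi
    induction i, hi using Nat.le_induction with
    | base => intro h; exact (hint l hl1 (by omega)).2
    | succ i hi ih =>
      intro h
      have h0 := ih (by omega)
      have a1 := (hint i (by omega) (by omega)).2
      have a2 := (hint i (by omega) (by omega)).1
      linarith
  have hu_mono : ∀ i, 1 ≤ i → ∀ j, i < j → j ≤ m → u j < u i := by
    intro i hi1 j hj
    induction j, hj using Nat.le_induction with
    | base =>
      intro h
      have h1 := (hint i hi1 (by omega)).1
      have h2 := (hint i hi1 (by omega)).2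
      linarith
    | succ j hj ih =>
      intro h
      have h0 := ih (by omega)
      have h1 := (hint j (by omega) (by omega)).1
      have h2 := (hint j (by omega) (by omega)).2
      linarith
  -- evaluations
  have evpm : ∀ t, eval t (p m) = cp * ∏ l ∈ Finset.range m, (t - u (l+1)) := by
    intro t; rw [hpm]; simp [eval_prod]
  have evpm1 : ∀ t, eval t (p (m-1)) = cq * ∏ l ∈ Finset.range (m-1), (t - v (l+1)) := by
    intro t; rw [hpm1]; simp [eval_prod]
  have pm_root : ∀ i, 1 ≤ i → i ≤ m → eval (u i) (p m) = 0 := by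
    intro i h1 h2
    rw [evpm]
    have hmem : (i-1) ∈ Finset.range m := by simp; omega
    rw [Finset.prod_eq_zero hmem (by rw [show i-1+1 = i from by omega]; ring)]
    ring
  have pm1_root : ∀ i, 1 ≤ i → i ≤ m-1 → eval (v i) (p (m-1)) = 0 := by
    intro i h1 h2
    rw [evpm1]
    have hmem : (i-1) ∈ Finset.range (m-1) := by simp; omega
    rw [Finset.prod_eq_zero hmem (by rw [show i-1+1 = i from by omega]; ring)]
    ring
  -- sign facts
  have S1 : ∀ i, 1 ≤ i → i ≤ m → 0 < (-1:ℝ)^(i+1) * eval (u i) (p (m-1)) := by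
    intro i h1 h2
    have hp := prod_sign_aux (u i) (fun l => v (l+1)) (i-1) (m-1) (by omega)
      (fun l hl => hv_gt_u (l+1) (by omega) i (by omega) h2)
      (fun l hl1 hl2 => hu_gt_v i h1 (l+1) (by omega) (by omega))
    rw [evpm1, show i+1 = (i-1)+2 from by omega, pow_add]
    norm_num
    rw [mul_left_comm]
    exact mul_pos hcq hp
  have S2 : ∀ i, 1 ≤ i → i ≤ m-1 → 0 < (-1:ℝ)^i * eval (v i) (p m) := by
    intro i h1 h2
    have hp := prod_sign_aux (v i) (fun l => u (l+1)) i m (by omega)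
      (fun l hl => by
        show v i < u (l + 1)
        rcases Nat.lt_or_ge (l+1) i with h | h
        · have h3 := hu_mono (l+1) (by omega) i h (by omega)
          have h4 := (hint i h1 h2).1
          linarith
        · have heq : l + 1 = i := by omega
          rw [heq]
          exact (hint i h1 h2).1)
      (fun l hl1 hl2 => hv_gt_u i h1 (l+1) (by omega) (by omega))
    rw [evpm]
    rw [mul_left_comm]
    exact mul_pos hcp hp
  -- degrees and leading coefficients
  have hprodmonic : (∏ i ∈ Finset.range m, (X - C (u (i+1)))).Monic :=
    monic_prod_of_monic _ _ fun i _ => monic_X_sub_C _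
  have hprodmonic1 : (∏ i ∈ Finset.range (m-1), (X - C (v (i+1)))).Monic :=
    monic_prod_of_monic _ _ fun i _ => monic_X_sub_C _
  have hproddeg : (∏ i ∈ Finset.range m, (X - C (u (i+1)))).natDegree = m := by
    rw [natDegree_prod_of_monic _ _ fun i _ => monic_X_sub_C _]
    simp
  have hproddeg1 : (∏ i ∈ Finset.range (m-1), (X - C (v (i+1)))).natDegree = m-1 := by
    rw [natDegree_prod_of_monic _ _ fun i _ => monic_X_sub_C _]
    simp
  have hdegpm : (p m).degree = (m : ℕ) := by
    rw [hpm, degree_C_mul (ne_of_gt hcp), degree_eq_natDegree hprodmonic.ne_zero, hproddeg]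
  have hdegpm1 : (p (m-1)).degree = ((m-1 : ℕ) : WithBot ℕ) := by
    rw [hpm1, degree_C_mul (ne_of_gt hcq), degree_eq_natDegree hprodmonic1.ne_zero, hproddeg1]
  have hdlt : (p (m-1)).degree < (p m).degree := by
    rw [hdegpm, hdegpm1]
    exact_mod_cast (by omega : m - 1 < m)
  have hlcpm : (p m).leadingCoeff = cp := by
    rw [hpm, leadingCoeff_mul, leadingCoeff_C, hprodmonic.leadingCoeff, mul_one]
  -- the two auxiliary polynomials
  set f : Polynomial ℝ := p m - p (m-1) with hf
  set g : Polynomial ℝ := p m + p (m-1) with hg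
  have hdegf : f.degree = (m : ℕ) := by
    rw [hf, degree_sub_eq_left_of_degree_lt hdlt, hdegpm]
  have hlcf : f.leadingCoeff = cp := by
    rw [hf, leadingCoeff_sub_of_degree_lt hdlt, hlcpm]
  have hdegg : g.degree = (m : ℕ) := by
    rw [hg, degree_add_eq_left_of_degree_lt hdlt, hdegpm]
  have hlcg : g.leadingCoeff = cp := by
    rw [hg, leadingCoeff_add_of_degree_lt' hdlt, hlcpm]
  have hdegf_pos : 0 < f.degree := by
    rw [hdegf]; exact_mod_cast (by omega : 0 < m)
  -- evaluation identities for f and g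
  have evf_u : ∀ i, 1 ≤ i → i ≤ m → eval (u i) f = - eval (u i) (p (m-1)) := by
    intro i h1 h2; rw [hf, eval_sub, pm_root i h1 h2]; ring
  have evg_u : ∀ i, 1 ≤ i → i ≤ m → eval (u i) g = eval (u i) (p (m-1)) := by
    intro i h1 h2; rw [hg, eval_add, pm_root i h1 h2]; ring
  have evf_v : ∀ i, 1 ≤ i → i ≤ m-1 → eval (v i) f = eval (v i) (p m) := by
    intro i h1 h2; rw [hf, eval_sub, pm1_root i h1 h2]; ring
  have evg_v : ∀ i, 1 ≤ i → i ≤ m-1 → eval (v i) g = eval (v i) (p m) := by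
    intro i h1 h2; rw [hg, eval_add, pm1_root i h1 h2]; ring
  -- the top root x0 of f
  have hfu1 : eval (u 1) f < 0 := by
    have h1 := S1 1 le_rfl hm
    rw [evf_u 1 le_rfl hm]
    norm_num at h1 ⊢
    linarith
  obtain ⟨x0, hx0a, hx0b⟩ :=
    exists_root_above f hdegf_pos (by rw [hlcf]; exact hcp) (u 1) hfu1
  -- the bottom root xN of g, via composition with -X
  have hHroot : ∃ w, w < u m ∧ eval w g = 0 := by
    set H : Polynomial ℝ := C ((-1:ℝ)^m) * g.comp (-X) with hH
    have hevH : ∀ t, eval t H = (-1:ℝ)^m * eval (-t) g := by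
      intro t; rw [hH]; simp [eval_comp]
    have hm1 : ((-1:ℝ)^m) * ((-1:ℝ)^m) = 1 := by
      rw [← pow_add]; exact Even.neg_one_pow ⟨m, rfl⟩
    have hmne : ((-1:ℝ)^m) ≠ 0 := pow_ne_zero _ (by norm_num)
    have hgne : g ≠ 0 := by
      intro h0
      rw [h0] at hdegg
      simp at hdegg
    have hndg : g.natDegree = m := natDegree_eq_of_degree_eq_some hdegg
    have hndnegX : (-X : Polynomial ℝ).natDegree = 1 := by simp
    have hlcH : H.leadingCoeff = cp := by
      rw [hH, leadingCoeff_mul, leadingCoeff_C,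
        leadingCoeff_comp (by rw [hndnegX]; norm_num)]
      simp only [leadingCoeff_neg, leadingCoeff_X, hlcg, hndg]
      linear_combination cp * hm1
    have hndH : H.natDegree = m := by
      rw [hH, natDegree_C_mul hmne, natDegree_comp, hndg, hndnegX, mul_one]
    have hHne : H ≠ 0 := leadingCoeff_ne_zero.mp (by rw [hlcH]; exact ne_of_gt hcp)
    have hdegH : 0 < H.degree := by
      rw [← natDegree_pos_iff_degree_pos, hndH]; omega
    have hHum : eval (-(u m)) H < 0 := by
      rw [hevH, neg_neg]
      have h1 := S1 m hm le_rfl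
      rw [← evg_u m hm le_rfl, pow_succ] at h1
      nlinarith
    obtain ⟨w', hw1, hw2⟩ :=
      exists_root_above H hdegH (by rw [hlcH]; exact hcp) (-(u m)) hHum
    refine ⟨-w', by linarith, ?_⟩
    rw [hevH] at hw2
    exact (mul_eq_zero.mp hw2).resolve_left hmne
  obtain ⟨xN, hxNa, hxNb⟩ := hHroot
  -- interior roots of g in (v i, u i)
  have hroots_g : ∀ i, ∃ yy : ℝ, 1 ≤ i → i ≤ m-1 →
      v i < yy ∧ yy < u i ∧ eval yy g = 0 := by
    intro i
    by_cases h : 1 ≤ i ∧ i ≤ m-1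
    · obtain ⟨h1, h2⟩ := h
      have e2 : 0 < eval (u i) (C ((-1:ℝ)^(i+1)) * g) := by
        rw [eval_mul, eval_C, evg_u i h1 (by omega)]
        exact S1 i h1 (by omega)
      have e1 : eval (v i) (C ((-1:ℝ)^(i+1)) * g) < 0 := by
        rw [eval_mul, eval_C, evg_v i h1 h2, pow_succ]
        have h3 := S2 i h1 h2
        nlinarith
      obtain ⟨xx, hxx1, hxx2, hxx3⟩ :=
        poly_root_between _ (hint i h1 h2).1 e1 e2
      refine ⟨xx, fun _ _ => ⟨hxx1, hxx2, ?_⟩⟩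
      rw [eval_mul, eval_C] at hxx3
      exact (mul_eq_zero.mp hxx3).resolve_left (pow_ne_zero _ (by norm_num))
    · exact ⟨0, fun h1 h2 => absurd ⟨h1, h2⟩ h⟩
  -- interior roots of f in (u (i+1), v i)
  have hroots_f : ∀ i, ∃ zz : ℝ, 1 ≤ i → i ≤ m-1 →
      u (i+1) < zz ∧ zz < v i ∧ eval zz f = 0 := by
    intro i
    by_cases h : 1 ≤ i ∧ i ≤ m-1
    · obtain ⟨h1, h2⟩ := h
      have e2 : 0 < eval (v i) (C ((-1:ℝ)^i) * f) := by
        rw [eval_mul, eval_C, evf_v i h1 h2]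
        exact S2 i h1 h2
      have e1 : eval (u (i+1)) (C ((-1:ℝ)^i) * f) < 0 := by
        rw [eval_mul, eval_C, evf_u (i+1) (by omega) (by omega)]
        have h3 := S1 (i+1) (by omega) (by omega)
        rw [show ((-1:ℝ))^(i+1+1) = (-1)^i from by rw [show i+1+1 = i+2 from rfl, pow_add]; norm_num] at h3
        nlinarith [h3]
      obtain ⟨xx, hxx1, hxx2, hxx3⟩ :=
        poly_root_between _ (hint i h1 h2).2 e1 e2
      refine ⟨xx, fun _ _ => ⟨hxx1, hxx2, ?_⟩⟩
      rw [eval_mul, eval_C] at hxx3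
      exact (mul_eq_zero.mp hxx3).resolve_left (pow_ne_zero _ (by norm_num))
    · exact ⟨0, fun h1 h2 => absurd ⟨h1, h2⟩ h⟩
  choose y hy using hroots_g
  choose z hz using hroots_f
  -- propagation lemma
  have prop : ∀ (t ε : ℝ), ε * ε = 1 → eval t (p (m-1)) = ε * eval t (p m) →
      ∀ k, k ≤ n → eval t (p (n-k)) = ε * eval t (p k) := by
    intro t ε hε h
    have erec : ∀ k, 1 ≤ k → k ≤ n-1 →
        eval t (p (k+1)) + eval t (p (k-1)) = (a k * t + b k) * eval t (p k) := by
      intro k h1 h2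
      have h3 := congrArg (eval t) (hrec k h1 h2)
      simpa using h3
    have key : ∀ j : ℕ,
        (j ≤ m → eval t (p (m-j)) = ε * eval t (p (m-1+j))) ∧
        (j+1 ≤ m → eval t (p (m-(j+1))) = ε * eval t (p (m-1+(j+1)))) := by
      intro j
      induction j with
      | zero =>
        constructor
        · intro _
          simp only [Nat.sub_zero, Nat.add_zero]
          linear_combination (-ε) * h - eval t (p m) * hε
        · intro _
          rw [show m-(0+1) = m-1 from by omega, show m-1+(0+1) = m from by omega]
          exact h
      | succ j ih =>
        refine ⟨ih.2, fun hj2 => ?_⟩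
        have hj : j + 2 ≤ m := by omega
        have r1 := erec (m+j) (by omega) (by omega)
        have r2 := erec (m-1-j) (by omega) (by omega)
        have ha := hrefl (m-1-j) (by omega) (by omega)
        rw [show m+j-1 = m-1+j from by omega] at r1
        rw [show m-1-j+1 = m-j from by omega, show m-1-j-1 = m-(j+2) from by omega,
          ha.1, ha.2, show n-(m-1-j) = m+j from by omega] at r2
        have s1 := ih.1 (by omega)
        have s2 := ih.2 (by omega)
        rw [show m-(j+1) = m-1-j from by omega, show m-1+(j+1) = m+j from by omega] at s2
        rw [show m-(j+1+1) = m-(j+2) from by omega, show m-1+(j+1+1) = m+j+1 from by omega]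
        linear_combination r2 - ε * r1 - s1 + (a (m+j) * t + b (m+j)) * s2
    intro k hk
    by_cases hkm : m - 1 ≤ k
    · have hh := (key (k - (m-1))).1 (by omega)
      rw [show m - (k-(m-1)) = n - k from by omega,
        show m-1+(k-(m-1)) = k from by omega] at hh
      exact hh
    · have hh := (key (m - k)).1 (by omega)
      rw [show m - (m-k) = k from by omega, show m-1+(m-k) = n-k from by omega] at hh
      linear_combination (-ε) * hh - eval t (p (n-k)) * hε
  -- definition of the nodes
  classical
  set xfun : ℕ → ℝ := fun j => if j = 0 then x0 else if j = n then xN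
    else if j % 2 = 1 then y ((j+1)/2) else z (j/2) with hxfun
  have hX0 : xfun 0 = x0 := by simp [hxfun]
  have hXn : xfun n = xN := by simp [hxfun, show n ≠ 0 from by omega]
  have hXodd : ∀ j, j ≠ 0 → j ≠ n → j % 2 = 1 → xfun j = y ((j+1)/2) := by
    intro j h1 h2 h3
    simp only [hxfun]
    rw [if_neg h1, if_neg h2, if_pos h3]
  have hXeven : ∀ j, j ≠ 0 → j ≠ n → j % 2 ≠ 1 → xfun j = z (j/2) := by
    intro j h1 h2 h3
    simp only [hxfun]
    rw [if_neg h1, if_neg h2, if_neg h3]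
  refine ⟨xfun, ?_, ?_⟩
  · -- strictly decreasing
    intro j hj
    by_cases hj0 : j = 0
    · subst hj0
      show xfun 1 < xfun 0
      rw [hX0]
      by_cases h1n : (1:ℕ) = n
      · rw [← h1n] at hXn
        rw [hXn]
        rw [show m = 1 from by omega] at hxNa
        linarith
      · rw [hXodd 1 (by omega) h1n (by norm_num), show (1+1)/2 = 1 from rfl]
        have hy1 := hy 1 le_rfl (by omega)
        linarith [hy1.2.1]
    · rcases Nat.even_or_odd j with hev | hod
      · -- j even, j ≥ 2, x j = z (j/2), j+1 odd
        obtain ⟨i, hi⟩ := hev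
        have hi1 : 1 ≤ i := by omega
        have him : i ≤ m - 1 := by omega
        have hzz := hz i hi1 him
        rw [hXeven j hj0 (by omega) (by omega), show j/2 = i from by omega]
        by_cases hjn : j + 1 = n
        · rw [hjn, hXn]
          rw [show i+1 = m from by omega] at hzz
          linarith [hzz.1]
        · rw [hXodd (j+1) (by omega) hjn (by omega), show (j+1+1)/2 = i+1 from by omega]
          have hyy := hy (i+1) (by omega) (by omega)
          linarith [hyy.2.1, hzz.1]
      · -- j odd, x j = y ((j+1)/2), x (j+1) = z ((j+1)/2)
        obtain ⟨i, hi⟩ := hod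
        have him : i + 1 ≤ m - 1 := by omega
        have hyy := hy (i+1) (by omega) him
        have hzz := hz (i+1) (by omega) him
        rw [hXodd j hj0 (by omega) (by omega), show (j+1)/2 = i+1 from by omega]
        rw [hXeven (j+1) (by omega) (by omega) (by omega), show (j+1)/2 = i+1 from by omega]
        linarith [hyy.1, hzz.2.1]
  · -- the main evaluation property
    intro j k hj hk
    have hsq : ((-1:ℝ)^j) * ((-1:ℝ)^j) = 1 := by
      rw [← pow_add]; exact Even.neg_one_pow ⟨j, rfl⟩
    have hE : eval (xfun j) (p (m-1)) = (-1:ℝ)^j * eval (xfun j) (p m) := by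
      rcases Nat.even_or_odd j with hev | hod
      · have hpow : (-1:ℝ)^j = 1 := Even.neg_one_pow hev
        rw [hpow, one_mul]
        by_cases hj0 : j = 0
        · rw [hj0, hX0]
          rw [hf, eval_sub, sub_eq_zero] at hx0b
          exact hx0b.symm
        · obtain ⟨i, hi⟩ := hev
          rw [hXeven j hj0 (by omega) (by omega), show j/2 = i from by omega]
          have hzz := hz i (by omega) (by omega)
          have h3 := hzz.2.2
          rw [hf, eval_sub, sub_eq_zero] at h3
          exact h3.symm
      · have hpow : (-1:ℝ)^j = -1 := Odd.neg_one_pow hod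
        rw [hpow]
        by_cases hjn : j = n
        · rw [hjn, hXn]
          rw [hg, eval_add] at hxNb
          linarith
        · obtain ⟨i, hi⟩ := hod
          rw [hXodd j (by omega) hjn (by omega), show (j+1)/2 = i+1 from by omega]
          have hyy := hy (i+1) (by omega) (by omega)
          have h3 := hyy.2.2
          rw [hg, eval_add] at h3
          linarith
    exact prop (xfun j) ((-1)^j) hsq hE k hk
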